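/- Suppose that on a measure space Γ̂ with counting measure μ, the averaging operators A_r f(x) := (1/μ(B_r(x))) ∫_{B_r(x)} f dμ satisfy the bilinear estimate a^{−r}·#{(x,y) ∈ E×F : d(x,y) ≤ r} ≤ C·(√b/a)^r·√(#E·#F) for all finite sets E, F and r ≥ 0, together with the volume bounds c·a^r ≤ μ(B_r(x)) ≤ C·b^r for r ≥ 1, with 1 < a ≤ b < a² and τ := log_a b. Then the global maximal operator M_∞ f := sup_{r≥1} A_r|f| is of weak type (τ,τ): μ({M_∞ f > λ}) ≤ C'·λ^{−τ}·‖f‖_{L^τ}^τ for all λ > 0. -/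

import Mathlib

open MeasureTheory

/-- The average of `|f|` over the closed ball of radius `r` centred at `x`, for an
`ℕ`-valued metric `d` and the counting measure. -/
noncomputable def ballAvg {V : Type*} (d : V → V → ℕ) (f : V → ℝ) (r : ℕ) (x : V) : ℝ :=
  (∑' y : {y : V | d x y ≤ r}, |f (y : V)|) / (({y : V | d x y ≤ r} : Set V).ncard : ℝ)

/-- The global maximal operator `M_∞ f = sup_{r ≥ 1} A_r |f|`. -/
noncomputable def globalMax {V : Type*} (d : V → V → ℕ) (f : V → ℝ) (x : V) : ℝ :=
  ⨆ r : {n : ℕ // 1 ≤ n}, ballAvg d f (r : ℕ) x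


private lemma exists_level (t : ℝ) (ht : 0 < t) :
    ∃ k : ℤ, (2:ℝ) ^ (k - 1) < t ∧ t ≤ (2:ℝ) ^ k := by
  refine ⟨⌈Real.logb 2 t⌉, ?_, ?_⟩
  · have h1 : ((⌈Real.logb 2 t⌉ - 1 : ℤ) : ℝ) < Real.logb 2 t := by
      push_cast
      have := Int.ceil_lt_add_one (Real.logb 2 t)
      linarith
    have h2 : (2:ℝ) ^ ((⌈Real.logb 2 t⌉ - 1 : ℤ) : ℝ) < (2:ℝ) ^ (Real.logb 2 t) :=
      (Real.rpow_lt_rpow_left_iff one_lt_two).mpr h1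
    rwa [Real.rpow_logb two_pos (by norm_num) ht, Real.rpow_intCast] at h2
  · have h1 : Real.logb 2 t ≤ ((⌈Real.logb 2 t⌉ : ℤ) : ℝ) := Int.le_ceil _
    have h2 : (2:ℝ) ^ (Real.logb 2 t) ≤ (2:ℝ) ^ ((⌈Real.logb 2 t⌉ : ℤ) : ℝ) :=
      (Real.rpow_le_rpow_left_iff one_lt_two).mpr h1
    rwa [Real.rpow_logb two_pos (by norm_num) ht, Real.rpow_intCast] at h2

private lemma finite_superlevel {V : Type*} {g : V → ℝ} (hg : Summable g) {ε : ℝ} (hε : 0 < ε) :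
    {x | ε < g x}.Finite := by
  have h := hg.tendsto_cofinite_zero
  have h2 : ∀ᶠ x in Filter.cofinite, g x < ε := h.eventually (gt_mem_nhds hε)
  have h3 : {x | ¬ g x < ε}.Finite := h2
  exact h3.subset (fun x hx => by simp only [Set.mem_setOf_eq] at *; linarith)

private lemma hprodL : ∀ (x y z w : ℝ), ((2:ℝ)^x)^2 * ((2:ℝ)^y)^2 * ((2:ℝ)^z * (((2:ℝ)^w)^2)⁻¹)
    = (2:ℝ)^(2*x + 2*y + z - 2*w) := by
  intro x y z w
  have hrp : ∀ x y : ℝ, (2:ℝ)^x * (2:ℝ)^y = 2^(x+y) := fun x y => (Real.rpow_add two_pos x y).symm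
  have hrpinv : ∀ x : ℝ, ((2:ℝ)^x)⁻¹ = 2^(-x) := fun x => (Real.rpow_neg two_pos.le x).symm
  have hrps : ∀ x : ℝ, ((2:ℝ)^x)^2 = 2^(2*x) := by
    intro x; rw [sq, hrp]; ring_nf
  rw [hrps, hrps, hrps, hrpinv, hrp, hrp, hrp]
  congr 1
  ring

private lemma L_GD (a b C c τ α δ σ c₀ D : ℝ)
    (ha0 : 0 < a) (hC : 0 < C) (hc : 0 < c) (hτ1 : 1 ≤ τ) (hτ2 : τ < 2)
    (hδdef : δ = (2-τ)/4) (hc₀ : 0 < c₀) (hσ0 : 0 < σ)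
    (hDdef : D = C + 2*(C/c)^2*(c₀⁻¹)^2)
    (har : ∀ r:ℕ, (a:ℝ)^r = (2:ℝ)^(α*(r:ℝ)))
    (hbrr : ∀ r:ℕ, (b:ℝ)^r = (2:ℝ)^(α*τ*(r:ℝ)))
    (hσn : ∀ n:ℕ, σ^n = (2:ℝ)^(-(δ*(n:ℝ)))) :
    ∀ (r:ℕ) (k:ℤ),
      min (C * b^r) ((C/c)^2 * ((2:ℝ)^k / (c₀ * σ ^ (k - ⌈α*(r:ℝ)⌉).natAbs))^2 * (b^r/(a^r)^2))
        ≤ D * (2:ℝ)^((k:ℝ)*τ - δ*|α*(r:ℝ) - (k:ℝ)|) := by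
  have hδ : 0 < δ := by rw [hδdef]; linarith
  have hδτ : δ ≤ τ := by rw [hδdef]; linarith
  have hδ4 : δ ≤ 1/4 := by rw [hδdef]; linarith
  have hrp : ∀ x y : ℝ, (2:ℝ)^x * (2:ℝ)^y = 2^(x+y) := fun x y => (Real.rpow_add two_pos x y).symm
  have h2z : ∀ k:ℤ, ((2:ℝ)^k) = (2:ℝ)^((k:ℝ)) := fun k => (Real.rpow_intCast 2 k).symm
  have hCD : C ≤ D := by rw [hDdef]; exact le_add_of_nonneg_right (by positivity)
  intro r k
  have hG2 : (C/c)^2 * ((2:ℝ)^k / (c₀ * σ ^ (k - ⌈α*(r:ℝ)⌉).natAbs))^2 * (b^r/(a^r)^2)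
      = (C/c)^2*(c₀⁻¹)^2 * (((2:ℝ)^((k:ℝ)))^2 * ((2:ℝ)^(δ*(((k - ⌈α*(r:ℝ)⌉).natAbs:ℕ):ℝ)))^2
          * ((2:ℝ)^(α*τ*(r:ℝ)) * (((2:ℝ)^(α*(r:ℝ)))^2)⁻¹)) := by
    have e1 : c₀ * σ ^ (k - ⌈α*(r:ℝ)⌉).natAbs
        = c₀ * ((2:ℝ)^(δ*(((k - ⌈α*(r:ℝ)⌉).natAbs:ℕ):ℝ)))⁻¹ := by
      rw [hσn, Real.rpow_neg two_pos.le]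
    have hne1 : ((2:ℝ)^(δ*(((k - ⌈α*(r:ℝ)⌉).natAbs:ℕ):ℝ))) ≠ 0 := (Real.rpow_pos_of_pos two_pos _).ne'
    have hne2 : ((2:ℝ)^(α*(r:ℝ))) ≠ 0 := (Real.rpow_pos_of_pos two_pos _).ne'
    have hne3 : ((2:ℝ)^((k:ℝ))) ≠ 0 := (Real.rpow_pos_of_pos two_pos _).ne'
    rw [e1, h2z, hbrr, har]
    field_simp
  set u := (k:ℝ) with hu
  set t := α*(r:ℝ) with ht
  rcases le_or_gt t u with hle | hlt
  · have habs : |t - u| = u - t := by rw [abs_of_nonpos (by linarith)]; ring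
    calc min (C * b^r) ((C/c)^2 * ((2:ℝ)^k / (c₀ * σ ^ (k - ⌈α*(r:ℝ)⌉).natAbs))^2 * (b^r/(a^r)^2))
        ≤ C * b^r := min_le_left _ _
      _ = C * (2:ℝ)^(α*τ*(r:ℝ)) := by rw [hbrr]
      _ ≤ C * (2:ℝ)^(u*τ - δ*|t - u|) := by
          apply mul_le_mul_of_nonneg_left _ hC.le
          apply (Real.rpow_le_rpow_left_iff one_lt_two).mpr
          rw [habs]
          have key : α*τ*(r:ℝ) = τ * t := by rw [ht]; ring
          rw [key]
          linarith [mul_nonneg (sub_nonneg.mpr hδτ) (sub_nonneg.mpr hle)]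
      _ ≤ D * (2:ℝ)^(u*τ - δ*|t - u|) :=
          mul_le_mul_of_nonneg_right hCD (Real.rpow_pos_of_pos two_pos _).le
  · have habs : |t - u| = t - u := by rw [abs_of_pos (by linarith)]
    have hceil1 : t ≤ ((⌈t⌉:ℤ):ℝ) := Int.le_ceil t
    have hceil2 : ((⌈t⌉:ℤ):ℝ) < t + 1 := Int.ceil_lt_add_one t
    have hncast : (((k - ⌈α*(r:ℝ)⌉).natAbs:ℕ):ℝ) = |u - ((⌈t⌉:ℤ):ℝ)| := by
      rw [Nat.cast_natAbs]
      push_cast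
      rw [abs_sub_comm]
    have hnle : (((k - ⌈α*(r:ℝ)⌉).natAbs:ℕ):ℝ) ≤ t - u + 1 := by
      rw [hncast, abs_of_nonpos (by linarith)]
      linarith
    have hKpos : (0:ℝ) < (C/c)^2*(c₀⁻¹)^2 := by positivity
    calc min (C * b^r) ((C/c)^2 * ((2:ℝ)^k / (c₀ * σ ^ (k - ⌈α*(r:ℝ)⌉).natAbs))^2 * (b^r/(a^r)^2))
        ≤ (C/c)^2 * ((2:ℝ)^k / (c₀ * σ ^ (k - ⌈α*(r:ℝ)⌉).natAbs))^2 * (b^r/(a^r)^2) := min_le_right _ _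
      _ = (C/c)^2*(c₀⁻¹)^2 * (2:ℝ)^(2*u + 2*(δ*(((k - ⌈α*(r:ℝ)⌉).natAbs:ℕ):ℝ)) + α*τ*(r:ℝ) - 2*t) := by
          rw [hG2, hprodL]
      _ ≤ (C/c)^2*(c₀⁻¹)^2 * (2:ℝ)^(u*τ - δ*(t-u) + 1) := by
          apply mul_le_mul_of_nonneg_left _ hKpos.le
          apply (Real.rpow_le_rpow_left_iff one_lt_two).mpr
          have key : α*τ*(r:ℝ) = τ * t := by rw [ht]; ring
          have hτδ : τ = 2 - 4*δ := by rw [hδdef]; ring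
          have h1 : δ*(((k - ⌈α*(r:ℝ)⌉).natAbs:ℕ):ℝ) ≤ δ*(t-u+1) := mul_le_mul_of_nonneg_left hnle hδ.le
          have h2 : 0 ≤ δ*(t-u) := mul_nonneg hδ.le (by linarith)
          have hδ2 : 2*δ ≤ 1 := by linarith
          rw [key, hτδ]
          linarith [h1, h2, hδ2]
      _ ≤ D * (2:ℝ)^(u*τ - δ*|t - u|) := by
          rw [habs]
          have e3 : (2:ℝ)^(u*τ - δ*(t-u) + 1) = (2:ℝ)^(u*τ - δ*(t-u)) * 2 := by
            rw [← hrp, Real.rpow_one]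
          rw [e3, ← mul_assoc]
          have h2K : (C/c)^2*(c₀⁻¹)^2*2 ≤ D := by rw [hDdef]; linarith [hC]
          calc (C/c)^2*(c₀⁻¹)^2 * (2:ℝ)^(u*τ - δ*(t-u)) * 2
              = ((C/c)^2*(c₀⁻¹)^2*2) * (2:ℝ)^(u*τ - δ*(t-u)) := by ring
            _ ≤ D * (2:ℝ)^(u*τ - δ*(t-u)) :=
                mul_le_mul_of_nonneg_right h2K (Real.rpow_pos_of_pos two_pos _).le

private lemma geomNat' (q : ℝ) (h0 : 0 ≤ q) (h1 : q < 1) (N : Finset ℕ) :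
    ∑ n ∈ N, q ^ n ≤ (1 - q)⁻¹ := by
  calc ∑ n ∈ N, q ^ n ≤ ∑' n : ℕ, q ^ n :=
        Summable.sum_le_tsum N (fun n _ => pow_nonneg h0 n) (summable_geometric_of_lt_one h0 h1)
    _ = (1 - q)⁻¹ := tsum_geometric_of_lt_one h0 h1

private lemma twoSidedGeom (q : ℝ) (h0 : 0 ≤ q) (h1 : q < 1) (c : ℤ) (K : Finset ℤ) :
    ∑ k ∈ K, q ^ (k - c).natAbs ≤ 2 * (1 - q)⁻¹ := by
  classical
  have hsplit := Finset.sum_filter_add_sum_filter_not K (fun k => c ≤ k)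
      (f := fun k => q ^ (k - c).natAbs)
  have h2 : ∑ k ∈ K.filter (fun k => c ≤ k), q ^ (k - c).natAbs ≤ (1 - q)⁻¹ := by
    have himg : ∑ k ∈ K.filter (fun k => c ≤ k), q ^ (k - c).natAbs
        = ∑ n ∈ (K.filter (fun k => c ≤ k)).image (fun k => (k - c).toNat), q ^ n := by
      rw [Finset.sum_image]
      · apply Finset.sum_congr rfl
        intro k hk
        have hck : c ≤ k := (Finset.mem_filter.mp hk).2
        congr 1
        omega
      · intro x hx y hy hxy
        have hcx : c ≤ x := (Finset.mem_filter.mp hx).2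
        have hcy : c ≤ y := (Finset.mem_filter.mp hy).2
        simp only at hxy
        omega
    rw [himg]; exact geomNat' q h0 h1 _
  have h3 : ∑ k ∈ K.filter (fun k => ¬ c ≤ k), q ^ (k - c).natAbs ≤ (1 - q)⁻¹ := by
    have himg : ∑ k ∈ K.filter (fun k => ¬ c ≤ k), q ^ (k - c).natAbs
        = ∑ n ∈ (K.filter (fun k => ¬ c ≤ k)).image (fun k => (c - k).toNat), q ^ n := by
      rw [Finset.sum_image]
      · apply Finset.sum_congr rfl
        intro k hk
        have hck : ¬ c ≤ k := (Finset.mem_filter.mp hk).2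
        congr 1
        omega
      · intro x hx y hy hxy
        have hcx : ¬ c ≤ x := (Finset.mem_filter.mp hx).2
        have hcy : ¬ c ≤ y := (Finset.mem_filter.mp hy).2
        simp only at hxy
        omega
    rw [himg]; exact geomNat' q h0 h1 _
  have := add_le_add h2 h3
  rw [hsplit] at this
  linarith

private lemma L_THSUM (σ : ℝ) (hσ0 : 0 ≤ σ) (hσ1 : σ < 1) (κ : ℤ) (K : Finset ℤ) :
    ∑ k ∈ K, (1 - σ)/2 * σ ^ (k - κ).natAbs ≤ 1 := by
  rw [← Finset.mul_sum]
  have h := twoSidedGeom σ hσ0 hσ1 κ K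
  have h1 : (0:ℝ) < 1 - σ := by linarith
  calc (1 - σ)/2 * ∑ k ∈ K, σ ^ (k - κ).natAbs ≤ (1 - σ)/2 * (2 * (1-σ)⁻¹) := by
        apply mul_le_mul_of_nonneg_left h (by linarith)
    _ = 1 := by field_simp

private lemma L_RSUM (α δ : ℝ) (hα : 0 < α) (hδ : 0 < δ) (u : ℝ) (Rk : Finset ℕ) :
    ∑ r ∈ Rk, (2:ℝ)^(-(δ*|α*(r:ℝ) - u|))
      ≤ (2:ℝ)^(δ*α) * (2*(1-(2:ℝ)^(-(δ*α)))⁻¹) := by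
  classical
  have hq'0 : (0:ℝ) < (2:ℝ)^(-(δ*α)) := Real.rpow_pos_of_pos two_pos _
  have hq'1 : (2:ℝ)^(-(δ*α)) < 1 :=
    Real.rpow_lt_one_of_one_lt_of_neg one_lt_two (by nlinarith)
  set q' := (2:ℝ)^(-(δ*α)) with hq'def
  set c' := ⌈u/α⌉ with hc'def
  have hper : ∀ r : ℕ, (2:ℝ)^(-(δ*|α*(r:ℝ) - u|)) ≤ (2:ℝ)^(δ*α) * q' ^ (((r:ℤ) - c').natAbs) := by
    intro r
    have hqn : q' ^ (((r:ℤ) - c').natAbs) = (2:ℝ)^(-((δ*α)*((((r:ℤ) - c').natAbs:ℕ):ℝ))) := by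
      rw [hq'def, ← Real.rpow_natCast ((2:ℝ)^(-(δ*α))) _, ← Real.rpow_mul two_pos.le]
      ring_nf
    rw [hqn, ← Real.rpow_add two_pos]
    apply (Real.rpow_le_rpow_left_iff one_lt_two).mpr
    -- exponent comparison
    have hcast : ((((r:ℤ) - c').natAbs:ℕ):ℝ) = |(r:ℝ) - (c':ℝ)| := by
      rw [Nat.cast_natAbs]
      push_cast
      norm_num
    have hceil1 : u/α ≤ (c':ℝ) := Int.le_ceil _
    have hceil2 : (c':ℝ) < u/α + 1 := Int.ceil_lt_add_one _
    have htri : |(r:ℝ) - (c':ℝ)| ≤ |(r:ℝ) - u/α| + 1 := by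
      have h1 : |(r:ℝ) - (c':ℝ)| ≤ |(r:ℝ) - u/α| + |u/α - (c':ℝ)| := abs_sub_le _ _ _
      have h2 : |u/α - (c':ℝ)| ≤ 1 := by
        rw [abs_of_nonpos (by linarith)]
        linarith
      linarith
    have hsplit : α*(r:ℝ) - u = α*((r:ℝ) - u/α) := by
      field_simp
    have habs2 : |α*(r:ℝ) - u| = α * |(r:ℝ) - u/α| := by
      rw [hsplit, abs_mul, abs_of_pos hα]
    rw [hcast, habs2]
    have h3 : (δ*α) * |(r:ℝ) - (c':ℝ)| ≤ (δ*α) * (|(r:ℝ) - u/α| + 1) :=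
      mul_le_mul_of_nonneg_left htri (by positivity)
    nlinarith [h3]
  calc ∑ r ∈ Rk, (2:ℝ)^(-(δ*|α*(r:ℝ) - u|))
      ≤ ∑ r ∈ Rk, (2:ℝ)^(δ*α) * q' ^ (((r:ℤ) - c').natAbs) :=
        Finset.sum_le_sum (fun r _ => hper r)
    _ = (2:ℝ)^(δ*α) * ∑ r ∈ Rk, q' ^ (((r:ℤ) - c').natAbs) := by rw [Finset.mul_sum]
    _ ≤ (2:ℝ)^(δ*α) * (2*(1-q')⁻¹) := by
        apply mul_le_mul_of_nonneg_left _ (Real.rpow_pos_of_pos two_pos _).le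
        have himg : ∑ r ∈ Rk, q' ^ (((r:ℤ) - c').natAbs)
            = ∑ z ∈ Rk.image (fun r : ℕ => (r:ℤ)), q' ^ ((z - c').natAbs) := by
          rw [Finset.sum_image]
          intro x _ y _ h
          simp only at h
          exact_mod_cast h
        rw [himg]
        exact twoSidedGeom q' hq'0.le hq'1 c' _

private lemma L_KSUM (a b C c τ α δ σ c₀ D : ℝ)
    (ha0 : 0 < a) (hC : 0 < C) (hc : 0 < c) (hτ1 : 1 ≤ τ) (hτ2 : τ < 2)
    (hα : 0 < α)
    (hδdef : δ = (2-τ)/4) (hc₀ : 0 < c₀) (hσ0 : 0 < σ)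
    (hDdef : D = C + 2*(C/c)^2*(c₀⁻¹)^2)
    (har : ∀ r:ℕ, (a:ℝ)^r = (2:ℝ)^(α*(r:ℝ)))
    (hbrr : ∀ r:ℕ, (b:ℝ)^r = (2:ℝ)^(α*τ*(r:ℝ)))
    (hσn : ∀ n:ℕ, σ^n = (2:ℝ)^(-(δ*(n:ℝ)))) :
    ∀ (k:ℤ) (Rk : Finset ℕ),
      ∑ r ∈ Rk, min (C * b^r) ((C/c)^2 * ((2:ℝ)^k / (c₀ * σ ^ (k - ⌈α*(r:ℝ)⌉).natAbs))^2 * (b^r/(a^r)^2))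
        ≤ (D * ((2:ℝ)^(δ*α) * (2*(1-(2:ℝ)^(-(δ*α)))⁻¹))) * (2:ℝ)^((k:ℝ)*τ) := by
  intro k Rk
  have hδ : 0 < δ := by rw [hδdef]; linarith
  have hD : 0 < D := by rw [hDdef]; positivity
  calc ∑ r ∈ Rk, min (C * b^r) ((C/c)^2 * ((2:ℝ)^k / (c₀ * σ ^ (k - ⌈α*(r:ℝ)⌉).natAbs))^2 * (b^r/(a^r)^2))
      ≤ ∑ r ∈ Rk, D * ((2:ℝ)^((k:ℝ)*τ) * (2:ℝ)^(-(δ*|α*(r:ℝ) - (k:ℝ)|))) := by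
        apply Finset.sum_le_sum
        intro r _
        have h := L_GD a b C c τ α δ σ c₀ D ha0 hC hc hτ1 hτ2 hδdef hc₀ hσ0 hDdef har hbrr hσn r k
        have he : (2:ℝ)^((k:ℝ)*τ) * (2:ℝ)^(-(δ*|α*(r:ℝ) - (k:ℝ)|))
            = (2:ℝ)^((k:ℝ)*τ - δ*|α*(r:ℝ) - (k:ℝ)|) := by
          rw [← Real.rpow_add two_pos]
          ring_nf
        rw [he]
        exact h
    _ = D * (2:ℝ)^((k:ℝ)*τ) * ∑ r ∈ Rk, (2:ℝ)^(-(δ*|α*(r:ℝ) - (k:ℝ)|)) := by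
        rw [Finset.mul_sum]
        apply Finset.sum_congr rfl
        intro r _
        ring
    _ ≤ D * (2:ℝ)^((k:ℝ)*τ) * ((2:ℝ)^(δ*α) * (2*(1-(2:ℝ)^(-(δ*α)))⁻¹)) := by
        apply mul_le_mul_of_nonneg_left (L_RSUM α δ hα hδ ((k:ℝ)) Rk)
        positivity
    _ = (D * ((2:ℝ)^(δ*α) * (2*(1-(2:ℝ)^(-(δ*α)))⁻¹))) * (2:ℝ)^((k:ℝ)*τ) := by ring

theorem stmt_11 {V : Type*} [MeasurableSpace V] (hms : ∀ s : Set V, MeasurableSet s)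
    (d : V → V → ℕ) (a b c C τ : ℝ)
    (hd0 : ∀ x y : V, d x y = 0 ↔ x = y)
    (hdsymm : ∀ x y : V, d x y = d y x)
    (hdtri : ∀ x y z : V, d x z ≤ d x y + d y z)
    (hfin : ∀ (x : V) (r : ℕ), ({y : V | d x y ≤ r} : Set V).Finite)
    (ha : 1 < a) (hab : a ≤ b) (hb : b < a ^ 2) (hc : 0 < c) (hC : 0 < C)
    (hτ : τ = Real.logb a b)
    (hvol : ∀ (x : V) (r : ℕ), 1 ≤ r →
      c * a ^ r ≤ (({y : V | d x y ≤ r} : Set V).ncard : ℝ) ∧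
        (({y : V | d x y ≤ r} : Set V).ncard : ℝ) ≤ C * b ^ r)
    (hbil : ∀ (r : ℕ) (E F : Set V), E.Finite → F.Finite →
      (({q : V × V | q.1 ∈ E ∧ q.2 ∈ F ∧ d q.1 q.2 ≤ r} : Set (V × V)).ncard : ℝ)
          / a ^ r ≤
        C * (Real.sqrt b / a) ^ r * Real.sqrt ((E.ncard : ℝ) * (F.ncard : ℝ))) :
    ∃ C' : ℝ, 0 < C' ∧ ∀ (f : V → ℝ) (lam : ℝ), 0 < lam →
      Summable (fun x => |f x| ^ τ) →
      Measure.count {x : V | lam < globalMax d f x} ≤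
        ENNReal.ofReal (C' * lam⁻¹ ^ τ * ∑' x : V, |f x| ^ τ) := by
  classical
  -- basic constants and facts
  have ha0 : (0:ℝ) < a := lt_trans one_pos ha
  have hb1 : (1:ℝ) < b := lt_of_lt_of_le ha hab
  have hb0 : (0:ℝ) < b := lt_trans one_pos hb1
  have hloga : 0 < Real.log a := Real.log_pos ha
  have hτ1 : 1 ≤ τ := by
    rw [hτ, Real.logb, le_div_iff₀ hloga, one_mul]
    exact Real.log_le_log ha0 hab
  have hτ2 : τ < 2 := by
    rw [hτ, Real.logb, div_lt_iff₀ hloga]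
    have h := Real.log_lt_log hb0 hb
    rwa [Real.log_pow, Nat.cast_ofNat] at h
  have hτ0 : 0 < τ := lt_of_lt_of_le one_pos hτ1
  have hba : a ^ τ = b := by rw [hτ]; exact Real.rpow_logb ha0 (ne_of_gt ha) hb0
  set α := Real.logb 2 a with hαdef
  have hα : 0 < α := Real.logb_pos one_lt_two ha
  have ha2 : (2:ℝ) ^ α = a := Real.rpow_logb two_pos (by norm_num) ha0
  set δ := (2 - τ)/4 with hδdef
  have hδ : 0 < δ := by rw [hδdef]; linarith
  set σ := (2:ℝ) ^ (-δ) with hσdef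
  have hσ0 : 0 < σ := Real.rpow_pos_of_pos two_pos _
  have hσ1 : σ < 1 := Real.rpow_lt_one_of_one_lt_of_neg one_lt_two (by linarith)
  set c₀ := (1 - σ)/2 with hc0def
  have hc₀ : 0 < c₀ := by rw [hc0def]; linarith
  set D := C + 2*(C/c)^2*(c₀⁻¹)^2 with hDdef
  have hD : 0 < D := by positivity
  have hq'0 : (0:ℝ) < (2:ℝ)^(-(δ*α)) := Real.rpow_pos_of_pos two_pos _
  have hq'1 : (2:ℝ)^(-(δ*α)) < 1 :=
    Real.rpow_lt_one_of_one_lt_of_neg one_lt_two (by nlinarith)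
  set Λ := (D * ((2:ℝ)^(δ*α) * (2*(1-(2:ℝ)^(-(δ*α)))⁻¹))) with hΛdef
  have hΛ : 0 < Λ := by
    rw [hΛdef]
    have h1 : (0:ℝ) < 1 - (2:ℝ)^(-(δ*α)) := by linarith
    have h2 : (0:ℝ) < (2:ℝ)^(δ*α) := Real.rpow_pos_of_pos two_pos _
    positivity
  have har : ∀ r:ℕ, (a:ℝ)^r = (2:ℝ)^(α*(r:ℝ)) := by
    intro r
    rw [Real.rpow_mul two_pos.le, ha2, Real.rpow_natCast]
  have hab2 : (2:ℝ)^(α*τ) = b := by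
    rw [Real.rpow_mul two_pos.le, ha2, hba]
  have hbrr : ∀ r:ℕ, (b:ℝ)^r = (2:ℝ)^(α*τ*(r:ℝ)) := by
    intro r
    rw [Real.rpow_mul two_pos.le, hab2, Real.rpow_natCast]
  have hσn : ∀ n:ℕ, σ^n = (2:ℝ)^(-(δ*(n:ℝ))) := by
    intro n
    rw [hσdef, ← Real.rpow_natCast ((2:ℝ)^(-δ)) n, ← Real.rpow_mul two_pos.le]
    ring_nf
  have h2zpos : ∀ k:ℤ, (0:ℝ) < (2:ℝ)^k := fun k => zpow_pos two_pos k
  -- the constant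
  refine ⟨Λ * (2:ℝ)^τ, by positivity, ?_⟩
  intro f lam hlam hsum
  set W := ∑' x : V, |f x| ^ τ with hWdef
  have hW0 : 0 ≤ W := tsum_nonneg (fun x => Real.rpow_nonneg (abs_nonneg _) τ)
  -- level sets
  set F : ℤ → Set V := fun k => {y : V | lam * (2:ℝ)^(k-1) < |f y| ∧ |f y| ≤ lam * (2:ℝ)^k}
    with hFdef
  have hFfin : ∀ k : ℤ, (F k).Finite := by
    intro k
    have hε : (0:ℝ) < (lam * (2:ℝ)^(k-1)) ^ τ := by
      apply Real.rpow_pos_of_pos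
      exact mul_pos hlam (h2zpos _)
    apply (finite_superlevel hsum hε).subset
    intro y hy
    have h1 : lam * (2:ℝ)^(k-1) < |f y| := hy.1
    exact Real.rpow_lt_rpow (by positivity) h1 hτ0
  -- membership in some level
  have hmemF : ∀ y : V, f y ≠ 0 → ∃ k : ℤ, y ∈ F k := by
    intro y hy
    have ht : 0 < |f y| / lam := div_pos (abs_pos.mpr hy) hlam
    obtain ⟨k, hk1, hk2⟩ := exists_level (|f y|/lam) ht
    have h1 : (2:ℝ)^(k-1) * lam < |f y| := (lt_div_iff₀ hlam).mp hk1
    have h2 : |f y| ≤ (2:ℝ)^k * lam := (div_le_iff₀ hlam).mp hk2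
    refine ⟨k, ?_, ?_⟩
    · rw [mul_comm]; exact h1
    · rw [mul_comm]; exact h2
  -- the main counting bound
  have key : ∀ T : Set V, T ⊆ {x : V | lam < globalMax d f x} → T.Finite →
      (T.ncard : ℝ) ≤ (Λ * (2:ℝ)^τ) * lam⁻¹ ^ τ * W := by
    intro T hTsub hTfin
    -- witness extraction
    have hwitx : ∀ x : V, lam < globalMax d f x → ∃ p : ℕ × ℤ, 1 ≤ p.1 ∧
        (c₀ * σ ^ (p.2 - ⌈α*((p.1:ℕ):ℝ)⌉).natAbs) * (c * a^p.1)
          < (2:ℝ)^p.2 * ((((hFfin p.2).toFinset).filter (fun y => d x y ≤ p.1)).card : ℝ) := by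
      intro x hx
      obtain ⟨r, hr1, hravg⟩ : ∃ r : ℕ, 1 ≤ r ∧ lam < ballAvg d f r x := by
        by_cases hbdd : BddAbove (Set.range fun r : {n : ℕ // 1 ≤ n} => ballAvg d f (r : ℕ) x)
        · obtain ⟨r, hr⟩ := (lt_ciSup_iff hbdd).mp hx
          exact ⟨r.1, r.2, hr⟩
        · exfalso
          have h0 : globalMax d f x = 0 := Real.iSup_of_not_bddAbove hbdd
          rw [h0] at hx; linarith
      set Bf := (hfin x r).toFinset with hBfdef
      have hBfx : x ∈ Bf := by
        rw [Set.Finite.mem_toFinset]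
        simp only [Set.mem_setOf_eq]
        have : d x x = 0 := (hd0 x x).mpr rfl
        omega
      have hcard_pos : 0 < (Bf.card : ℝ) := by
        have : 0 < Bf.card := Finset.card_pos.mpr ⟨x, hBfx⟩
        exact_mod_cast this
      have havg : ballAvg d f r x = (∑ y ∈ Bf, |f y|) / (Bf.card : ℝ) := by
        rw [ballAvg]
        have h1 : ({y : V | d x y ≤ r} : Set V) = (Bf : Set V) := (Set.Finite.coe_toFinset _).symm
        rw [h1, Set.ncard_coe_finset]
        congr 1
        exact Finset.tsum_subtype' Bf (fun y => |f y|)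
      have hSx : lam * (Bf.card:ℝ) < ∑ y ∈ Bf, |f y| := by
        rw [havg] at hravg
        exact (lt_div_iff₀ hcard_pos).mp hravg
      have hvol1 : c * a^r ≤ (Bf.card : ℝ) := by
        have h := (hvol x r hr1).1
        rwa [Set.ncard_eq_toFinset_card _ (hfin x r)] at h
      have hSx2 : lam * (c * a^r) < ∑ y ∈ Bf, |f y| :=
        lt_of_le_of_lt (mul_le_mul_of_nonneg_left hvol1 hlam.le) hSx
      by_contra hcon
      push_neg at hcon
      set lv : V → ℤ := fun y => if h : f y ≠ 0 then (hmemF y h).choose else 0 with hlvdef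
      have hlv : ∀ y : V, f y ≠ 0 → y ∈ F (lv y) := by
        intro y hy
        rw [hlvdef]
        simp only [dif_pos hy]
        exact (hmemF y hy).choose_spec
      set Bne := Bf.filter (fun y => f y ≠ 0) with hBnedef
      have hsum_ne : ∑ y ∈ Bne, |f y| = ∑ y ∈ Bf, |f y| := by
        apply Finset.sum_subset (Finset.filter_subset _ _)
        intro y hy hyn
        have h0 : ¬ (f y ≠ 0) := fun h => hyn (Finset.mem_filter.mpr ⟨hy, h⟩)
        push_neg at h0
        rw [h0, abs_zero]
      set K₀ := Bne.image lv with hK0def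
      have hfib : ∑ k ∈ K₀, ∑ y ∈ Bne.filter (fun y => lv y = k), |f y| = ∑ y ∈ Bne, |f y| :=
        Finset.sum_fiberwise_of_maps_to (fun y hy => Finset.mem_image_of_mem lv hy) _
      have hinner : ∀ k ∈ K₀, ∑ y ∈ Bne.filter (fun y => lv y = k), |f y|
          ≤ lam * ((2:ℝ)^k * ((((hFfin k).toFinset).filter (fun y => d x y ≤ r)).card : ℝ)) := by
        intro k hk
        have hb' : ∀ y ∈ Bne.filter (fun y => lv y = k), |f y| ≤ lam * (2:ℝ)^k := by
          intro y hy
          obtain ⟨hy1, hy2⟩ := Finset.mem_filter.mp hy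
          obtain ⟨hy3, hy4⟩ := Finset.mem_filter.mp hy1
          have hmem := hlv y hy4
          rw [hy2] at hmem
          exact hmem.2
        have hsub : Bne.filter (fun y => lv y = k)
            ⊆ ((hFfin k).toFinset).filter (fun y => d x y ≤ r) := by
          intro y hy
          obtain ⟨hy1, hy2⟩ := Finset.mem_filter.mp hy
          obtain ⟨hy3, hy4⟩ := Finset.mem_filter.mp hy1
          apply Finset.mem_filter.mpr
          constructor
          · rw [Set.Finite.mem_toFinset]
            rw [← hy2]
            exact hlv y hy4
          · exact (Set.Finite.mem_toFinset (hfin x r)).mp hy3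
        calc ∑ y ∈ Bne.filter (fun y => lv y = k), |f y|
            ≤ (Bne.filter (fun y => lv y = k)).card • (lam * (2:ℝ)^k) :=
              Finset.sum_le_card_nsmul _ _ _ hb'
          _ = ((Bne.filter (fun y => lv y = k)).card : ℝ) * (lam * (2:ℝ)^k) := by
              rw [nsmul_eq_mul]
          _ ≤ ((((hFfin k).toFinset).filter (fun y => d x y ≤ r)).card : ℝ) * (lam * (2:ℝ)^k) := by
              apply mul_le_mul_of_nonneg_right _ (by positivity)
              exact_mod_cast Finset.card_le_card hsub
          _ = lam * ((2:ℝ)^k * ((((hFfin k).toFinset).filter (fun y => d x y ≤ r)).card : ℝ)) := by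
              ring
      have hcontra : ∑ y ∈ Bf, |f y| ≤ lam * (c * a^r) := by
        rw [← hsum_ne, ← hfib]
        calc ∑ k ∈ K₀, ∑ y ∈ Bne.filter (fun y => lv y = k), |f y|
            ≤ ∑ k ∈ K₀, lam * ((2:ℝ)^k *
                ((((hFfin k).toFinset).filter (fun y => d x y ≤ r)).card : ℝ)) :=
              Finset.sum_le_sum hinner
          _ ≤ ∑ k ∈ K₀, lam * ((c₀ * σ ^ (k - ⌈α*((r:ℕ):ℝ)⌉).natAbs) * (c * a^r)) := by
              apply Finset.sum_le_sum
              intro k _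
              have h := hcon (r, k) hr1
              exact mul_le_mul_of_nonneg_left h hlam.le
          _ = (lam * (c * a^r)) * ∑ k ∈ K₀, ((1-σ)/2 * σ ^ (k - ⌈α*((r:ℕ):ℝ)⌉).natAbs) := by
              rw [Finset.mul_sum]
              apply Finset.sum_congr rfl
              intro k _
              rw [hc0def]
              ring
          _ ≤ (lam * (c * a^r)) * 1 := by
              apply mul_le_mul_of_nonneg_left (L_THSUM σ hσ0.le hσ1 _ K₀) (by positivity)
          _ = lam * (c * a^r) := by ring
      linarith
    -- choose witness function
    set w : V → ℕ × ℤ := fun x => if h : lam < globalMax d f x then (hwitx x h).choose else (1, 0)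
      with hwdef
    have hw : ∀ x : V, lam < globalMax d f x → (1 ≤ (w x).1 ∧
        (c₀ * σ ^ ((w x).2 - ⌈α*(((w x).1:ℕ):ℝ)⌉).natAbs) * (c * a^(w x).1)
          < (2:ℝ)^(w x).2 *
            ((((hFfin (w x).2).toFinset).filter (fun y => d x y ≤ (w x).1)).card : ℝ)) := by
      intro x h
      rw [hwdef]
      simp only [dif_pos h]
      exact (hwitx x h).choose_spec
    set Tf := hTfin.toFinset with hTfdef
    have hTmem : ∀ x ∈ Tf, lam < globalMax d f x := fun x hx =>
      hTsub ((Set.Finite.mem_toFinset hTfin).mp hx)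
    set R := Tf.image w with hRdef
    have hcount : (T.ncard : ℝ) = ∑ p ∈ R, ((Tf.filter (fun x => w x = p)).card : ℝ) := by
      rw [Set.ncard_eq_toFinset_card T hTfin, ← Nat.cast_sum]
      congr 1
      exact Finset.card_eq_sum_card_fiberwise (fun x hx => Finset.mem_image_of_mem w hx)
    -- per-fiber bound
    have hfiber : ∀ p ∈ R, ((Tf.filter (fun x => w x = p)).card : ℝ)
        ≤ (((hFfin p.2).toFinset).card : ℝ) * min (C * b^p.1)
            ((C/c)^2 * ((2:ℝ)^p.2 / (c₀ * σ ^ (p.2 - ⌈α*((p.1:ℕ):ℝ)⌉).natAbs))^2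
              * (b^p.1/(a^p.1)^2)) := by
      intro p hp
      obtain ⟨r, k⟩ := p
      dsimp only
      obtain ⟨x₀, hx₀T, hx₀w⟩ := Finset.mem_image.mp hp
      have hr1 : 1 ≤ r := by
        have h := (hw x₀ (hTmem x₀ hx₀T)).1
        rw [hx₀w] at h
        exact h
      set E := Tf.filter (fun x => w x = (r, k)) with hEdef
      set Ff := (hFfin k).toFinset with hFfdef
      set θv := c₀ * σ ^ (k - ⌈α*((r:ℕ):ℝ)⌉).natAbs with hθvdef
      have hθvpos : 0 < θv := mul_pos hc₀ (pow_pos hσ0 _)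
      have hxprop : ∀ x ∈ E, θv * (c * a^r)
          < (2:ℝ)^k * ((Ff.filter (fun y => d x y ≤ r)).card : ℝ) := by
        intro x hx
        obtain ⟨hx1, hx2⟩ := Finset.mem_filter.mp hx
        have h := (hw x (hTmem x hx1)).2
        rw [hx2] at h
        exact h
      have hβpos : ∀ x ∈ E, 0 < ((Ff.filter (fun y => d x y ≤ r)).card : ℝ) := by
        intro x hx
        have h := hxprop x hx
        by_contra h0
        push_neg at h0
        have h1 : ((Ff.filter (fun y => d x y ≤ r)).card : ℝ) = 0 := le_antisymm h0 (by positivity)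
        rw [h1, mul_zero] at h
        have : (0:ℝ) < θv * (c * a^r) := by positivity
        linarith
      -- Branch 1 : covering by balls around F_k
      have hF1 : ((E.card : ℝ)) ≤ (Ff.card : ℝ) * (C * b^r) := by
        have hsub : E ⊆ Ff.biUnion (fun y => (hfin y r).toFinset) := by
          intro x hx
          have hβ := hβpos x hx
          have hβn : 0 < (Ff.filter (fun y => d x y ≤ r)).card := by exact_mod_cast hβ
          obtain ⟨y, hy⟩ := Finset.card_pos.mp hβn
          obtain ⟨hy1, hy2⟩ := Finset.mem_filter.mp hy
          apply Finset.mem_biUnion.mpr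
          refine ⟨y, hy1, ?_⟩
          rw [Set.Finite.mem_toFinset]
          simp only [Set.mem_setOf_eq]
          rw [hdsymm]
          exact hy2
        have h1 : (E.card : ℝ) ≤ ((Ff.biUnion (fun y => (hfin y r).toFinset)).card : ℝ) := by
          exact_mod_cast Finset.card_le_card hsub
        have h2 : ((Ff.biUnion (fun y => (hfin y r).toFinset)).card : ℝ)
            ≤ ∑ y ∈ Ff, (((hfin y r).toFinset.card) : ℝ) := by
          rw [← Nat.cast_sum]
          exact_mod_cast Finset.card_biUnion_le
        have h3 : ∀ y ∈ Ff, (((hfin y r).toFinset.card) : ℝ) ≤ C * b^r := by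
          intro y _
          have h := (hvol y r hr1).2
          rwa [Set.ncard_eq_toFinset_card _ (hfin y r)] at h
        calc (E.card : ℝ) ≤ ∑ y ∈ Ff, (((hfin y r).toFinset.card) : ℝ) := le_trans h1 h2
          _ ≤ ∑ y ∈ Ff, (C * b^r) := Finset.sum_le_sum h3
          _ = (Ff.card : ℝ) * (C * b^r) := by rw [Finset.sum_const, nsmul_eq_mul]
      -- Branch 2 : bilinear estimate
      have hF2 : ((E.card : ℝ)) ≤ (Ff.card : ℝ)
          * ((C/c)^2 * ((2:ℝ)^k / θv)^2 * (b^r/(a^r)^2)) := by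
        set P := ((E ×ˢ Ff).filter (fun q : V × V => d q.1 q.2 ≤ r)) with hPdef
        have hPcard : P.card = ∑ x ∈ E, (Ff.filter (fun y => d x y ≤ r)).card := by
          rw [Finset.card_eq_sum_card_fiberwise
            (f := Prod.fst) (t := E) (fun q hq => (Finset.mem_product.mp (Finset.mem_filter.mp hq).1).1)]
          apply Finset.sum_congr rfl
          intro x hx
          refine Finset.card_bij' (fun q _ => q.2) (fun y _ => (x, y)) ?_ ?_ ?_ ?_
          case _ => -- hi
            intro q hq
            obtain ⟨hq1, hq2⟩ := Finset.mem_filter.mp hq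
            obtain ⟨hq3, hq4⟩ := Finset.mem_filter.mp hq1
            apply Finset.mem_filter.mpr
            refine ⟨(Finset.mem_product.mp hq3).2, ?_⟩
            show d x q.2 ≤ r
            rw [← hq2]
            exact hq4
          case _ => -- hj
            intro y hy
            obtain ⟨hy1, hy2⟩ := Finset.mem_filter.mp hy
            exact Finset.mem_filter.mpr ⟨Finset.mem_filter.mpr ⟨Finset.mem_product.mpr ⟨hx, hy1⟩, hy2⟩, rfl⟩
          case _ => -- left_inv
            intro q hq
            obtain ⟨hq1, hq2⟩ := Finset.mem_filter.mp hq
            exact Prod.ext hq2.symm rfl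
          case _ =>
            intro y _
            rfl
        have hPlow : (E.card : ℝ) * (θv * (c * a^r) / (2:ℝ)^k) ≤ (P.card : ℝ) := by
          have hper : ∀ x ∈ E, θv * (c * a^r) / (2:ℝ)^k
              ≤ ((Ff.filter (fun y => d x y ≤ r)).card : ℝ) := by
            intro x hx
            have h := hxprop x hx
            rw [div_le_iff₀ (h2zpos k)]
            rw [mul_comm ((2:ℝ)^k) _] at h
            exact le_of_lt h
          calc (E.card : ℝ) * (θv * (c * a^r) / (2:ℝ)^k)
              = E.card • (θv * (c * a^r) / (2:ℝ)^k) := by rw [nsmul_eq_mul]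
            _ ≤ ∑ x ∈ E, ((Ff.filter (fun y => d x y ≤ r)).card : ℝ) :=
                Finset.card_nsmul_le_sum _ _ _ hper
            _ = (P.card : ℝ) := by rw [hPcard, Nat.cast_sum]
        have hbil' := hbil r (E : Set V) (Ff : Set V) E.finite_toSet Ff.finite_toSet
        have hsetP : {q : V × V | q.1 ∈ (E : Set V) ∧ q.2 ∈ (Ff : Set V) ∧ d q.1 q.2 ≤ r}
            = (P : Set (V × V)) := by
          ext q
          simp only [hPdef, Set.mem_setOf_eq, Finset.coe_filter, Finset.mem_coe,
            Finset.mem_product, Finset.mem_filter]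
          tauto
        rw [hsetP, Set.ncard_coe_finset, Set.ncard_coe_finset, Set.ncard_coe_finset] at hbil'
        have hPup : (P.card : ℝ)
            ≤ C * (Real.sqrt b)^r * Real.sqrt ((E.card : ℝ) * (Ff.card : ℝ)) := by
          have h := mul_le_mul_of_nonneg_right hbil' (pow_pos ha0 r).le
          rw [div_mul_cancel₀ _ (pow_pos ha0 r).ne'] at h
          calc (P.card : ℝ)
              ≤ C * (Real.sqrt b / a)^r * Real.sqrt ((E.card : ℝ) * (Ff.card : ℝ)) * a^r := h
            _ = C * ((Real.sqrt b / a)^r * a^r) * Real.sqrt ((E.card : ℝ) * (Ff.card : ℝ)) := by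
                ring
            _ = C * (Real.sqrt b)^r * Real.sqrt ((E.card : ℝ) * (Ff.card : ℝ)) := by
                rw [div_pow, div_mul_cancel₀ _ (pow_ne_zero r ha0.ne')]
        set m := (E.card : ℝ) with hmdef
        set nn := (Ff.card : ℝ) with hnndef
        have hm0 : 0 ≤ m := Nat.cast_nonneg _
        have hnn0 : 0 ≤ nn := Nat.cast_nonneg _
        set Θ := θv * (c * a^r) / (2:ℝ)^k with hΘdef
        have hΘpos : 0 < Θ := by
          rw [hΘdef]
          have h1 : (0:ℝ) < a^r := pow_pos ha0 r
          have h2 := h2zpos k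
          positivity
        have hchain : m * Θ ≤ C * (Real.sqrt b)^r * (Real.sqrt m * Real.sqrt nn) := by
          rw [← Real.sqrt_mul hm0]
          exact le_trans hPlow hPup
        have hsq : (m * Θ) * (m * Θ) ≤ (C^2 * b^r) * (m * nn) := by
          have h1 : 0 ≤ m * Θ := mul_nonneg hm0 hΘpos.le
          have h2 := mul_self_le_mul_self h1 hchain
          have h3 : (C * (Real.sqrt b)^r * (Real.sqrt m * Real.sqrt nn))
              * (C * (Real.sqrt b)^r * (Real.sqrt m * Real.sqrt nn))
              = C^2 * ((Real.sqrt b)^r * (Real.sqrt b)^r)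
                * ((Real.sqrt m * Real.sqrt m) * (Real.sqrt nn * Real.sqrt nn)) := by
            ring
          have h4 : (Real.sqrt b)^r * (Real.sqrt b)^r = b^r := by
            rw [← pow_add]
            have : Real.sqrt b ^ (r + r) = (Real.sqrt b ^ 2)^r := by
              rw [← pow_mul]
              congr 1
              ring
            rw [this, Real.sq_sqrt hb0.le]
          have h5 : Real.sqrt m * Real.sqrt m = m := Real.mul_self_sqrt hm0
          have h6 : Real.sqrt nn * Real.sqrt nn = nn := Real.mul_self_sqrt hnn0
          rw [h3, h4, h5, h6] at h2
          linarith [h2]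
        rcases eq_or_lt_of_le hm0 with hmz | hmpos
        · rw [← hmz]
          exact mul_nonneg hnn0 (mul_nonneg (mul_nonneg (sq_nonneg _) (sq_nonneg _))
            (div_nonneg (pow_nonneg hb0.le _) (sq_nonneg _)))
        · have hcancel : m * Θ^2 ≤ C^2 * b^r * nn := by
            have h7 : m * (m * Θ^2) ≤ m * (C^2 * b^r * nn) := by
              calc m * (m * Θ^2) = (m * Θ) * (m * Θ) := by ring
                _ ≤ (C^2 * b^r) * (m * nn) := hsq
                _ = m * (C^2 * b^r * nn) := by ring
            exact le_of_mul_le_mul_left h7 hmpos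
          have heq : nn * ((C/c)^2 * ((2:ℝ)^k / θv)^2 * (b^r/(a^r)^2))
              = (C^2 * b^r * nn) / Θ^2 := by
            rw [hΘdef]
            have h2k := (h2zpos k).ne'
            have har' := (pow_pos ha0 r).ne'
            field_simp
          rw [heq]
          rw [le_div_iff₀ (pow_pos hΘpos 2)]
          exact hcancel
      -- combine the two branches
      have hminM : (Ff.card : ℝ) * min (C * b^r)
          ((C/c)^2 * ((2:ℝ)^k / θv)^2 * (b^r/(a^r)^2))
          = min ((Ff.card : ℝ) * (C * b^r))
              ((Ff.card : ℝ) * ((C/c)^2 * ((2:ℝ)^k / θv)^2 * (b^r/(a^r)^2))) :=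
        mul_min_of_nonneg _ _ (Nat.cast_nonneg _)
      rw [hminM]
      exact le_min hF1 hF2
    -- regroup by k and sum
    have hsum1 : (T.ncard : ℝ) ≤ ∑ p ∈ R, (((hFfin p.2).toFinset).card : ℝ) * min (C * b^p.1)
        ((C/c)^2 * ((2:ℝ)^p.2 / (c₀ * σ ^ (p.2 - ⌈α*((p.1:ℕ):ℝ)⌉).natAbs))^2
          * (b^p.1/(a^p.1)^2)) := by
      rw [hcount]
      exact Finset.sum_le_sum hfiber
    set KK := R.image Prod.snd with hKKdef
    have hregroup : ∑ p ∈ R, (((hFfin p.2).toFinset).card : ℝ) * min (C * b^p.1)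
        ((C/c)^2 * ((2:ℝ)^p.2 / (c₀ * σ ^ (p.2 - ⌈α*((p.1:ℕ):ℝ)⌉).natAbs))^2
          * (b^p.1/(a^p.1)^2))
        ≤ Λ * ∑ k ∈ KK, (((hFfin k).toFinset).card : ℝ) * (2:ℝ)^((k:ℝ)*τ) := by
      rw [← Finset.sum_fiberwise_of_maps_to (g := Prod.snd) (t := KK)
        (fun p hp => Finset.mem_image_of_mem Prod.snd hp)]
      rw [Finset.mul_sum]
      apply Finset.sum_le_sum
      intro k _
      have hcongr : ∑ p ∈ R.filter (fun p => p.2 = k),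
          (((hFfin p.2).toFinset).card : ℝ) * min (C * b^p.1)
            ((C/c)^2 * ((2:ℝ)^p.2 / (c₀ * σ ^ (p.2 - ⌈α*((p.1:ℕ):ℝ)⌉).natAbs))^2
              * (b^p.1/(a^p.1)^2))
          = ∑ rr ∈ (R.filter (fun p => p.2 = k)).image Prod.fst,
            (((hFfin k).toFinset).card : ℝ) * min (C * b^rr)
              ((C/c)^2 * ((2:ℝ)^k / (c₀ * σ ^ (k - ⌈α*((rr:ℕ):ℝ)⌉).natAbs))^2
                * (b^rr/(a^rr)^2)) := by
        rw [Finset.sum_image]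
        · apply Finset.sum_congr rfl
          intro p hp
          have hpk : p.2 = k := (Finset.mem_filter.mp hp).2
          rw [← hpk]
        · intro p hp q hq hpq
          have h1 : p.2 = k := (Finset.mem_filter.mp hp).2
          have h2 : q.2 = k := (Finset.mem_filter.mp hq).2
          exact Prod.ext hpq (h1.trans h2.symm)
      rw [hcongr, ← Finset.mul_sum]
      have hks := L_KSUM a b C c τ α δ σ c₀ D ha0 hC hc hτ1 hτ2 hα hδdef hc₀ hσ0 hDdef
        har hbrr hσn k ((R.filter (fun p => p.2 = k)).image Prod.fst)
      calc (((hFfin k).toFinset).card : ℝ) * ∑ rr ∈ (R.filter (fun p => p.2 = k)).image Prod.fst,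
            min (C * b^rr)
              ((C/c)^2 * ((2:ℝ)^k / (c₀ * σ ^ (k - ⌈α*((rr:ℕ):ℝ)⌉).natAbs))^2
                * (b^rr/(a^rr)^2))
          ≤ (((hFfin k).toFinset).card : ℝ) * (Λ * (2:ℝ)^((k:ℝ)*τ)) := by
            apply mul_le_mul_of_nonneg_left _ (Nat.cast_nonneg _)
            rw [hΛdef]
            exact hks
        _ = Λ * ((((hFfin k).toFinset).card : ℝ) * (2:ℝ)^((k:ℝ)*τ)) := by ring
    -- the L^τ bound
    have hfinal : ∑ k ∈ KK, (((hFfin k).toFinset).card : ℝ) * (2:ℝ)^((k:ℝ)*τ)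
        ≤ (2:ℝ)^τ * lam⁻¹ ^ τ * W := by
      have hone : ∀ k : ℤ, (2:ℝ)^((k:ℝ)*τ)
          = (2:ℝ)^τ * lam⁻¹ ^ τ * (lam * (2:ℝ)^(k-1))^τ := by
        intro k
        have e1 : (lam * (2:ℝ)^(k-1))^τ = lam^τ * ((2:ℝ)^(k-1 : ℤ))^τ :=
          Real.mul_rpow hlam.le (h2zpos _).le
        have e2 : ((2:ℝ)^(k-1 : ℤ))^τ = (2:ℝ)^((((k-1 : ℤ)):ℝ)*τ) := by
          rw [← Real.rpow_intCast 2 (k-1), ← Real.rpow_mul two_pos.le]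
        have e3 : lam⁻¹ ^ τ = (lam^τ)⁻¹ := Real.inv_rpow hlam.le τ
        rw [e1, e2, e3]
        have e4 : (2:ℝ)^τ * (lam ^ τ)⁻¹ * (lam ^ τ * (2:ℝ)^((((k-1 : ℤ)):ℝ)*τ))
            = ((lam ^ τ)⁻¹ * lam ^ τ) * ((2:ℝ)^τ * (2:ℝ)^((((k-1 : ℤ)):ℝ)*τ)) := by ring
        rw [e4, inv_mul_cancel₀ (Real.rpow_pos_of_pos hlam τ).ne', one_mul,
          ← Real.rpow_add two_pos]
        congr 1
        push_cast
        ring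
      have hcardb : ∀ k : ℤ, (((hFfin k).toFinset).card : ℝ) * (lam * (2:ℝ)^(k-1))^τ
          ≤ ∑ y ∈ (hFfin k).toFinset, |f y| ^ τ := by
        intro k
        have hper : ∀ y ∈ (hFfin k).toFinset, (lam * (2:ℝ)^(k-1))^τ ≤ |f y| ^ τ := by
          intro y hy
          have hmem := (Set.Finite.mem_toFinset (hFfin k)).mp hy
          have h1 : lam * (2:ℝ)^(k-1) < |f y| := hmem.1
          exact Real.rpow_le_rpow (by positivity) h1.le hτ0.le
        calc (((hFfin k).toFinset).card : ℝ) * (lam * (2:ℝ)^(k-1))^τ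
            = ((hFfin k).toFinset).card • (lam * (2:ℝ)^(k-1))^τ := by rw [nsmul_eq_mul]
          _ ≤ ∑ y ∈ (hFfin k).toFinset, |f y| ^ τ := Finset.card_nsmul_le_sum _ _ _ hper
      have hdisj : ∀ k ∈ KK, ∀ k' ∈ KK, k ≠ k' →
          Disjoint ((hFfin k).toFinset) ((hFfin k').toFinset) := by
        intro k _ k' _ hkk
        rw [Finset.disjoint_left]
        intro y hy hy'
        have h1 := (Set.Finite.mem_toFinset (hFfin k)).mp hy
        have h2 := (Set.Finite.mem_toFinset (hFfin k')).mp hy'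
        have h3 : (2:ℝ)^(k-1) * lam < (2:ℝ)^k' * lam := by
          calc (2:ℝ)^(k-1) * lam = lam * (2:ℝ)^(k-1) := by ring
            _ < |f y| := h1.1
            _ ≤ lam * (2:ℝ)^k' := h2.2
            _ = (2:ℝ)^k' * lam := by ring
        have h4 : (2:ℝ)^(k'-1) * lam < (2:ℝ)^k * lam := by
          calc (2:ℝ)^(k'-1) * lam = lam * (2:ℝ)^(k'-1) := by ring
            _ < |f y| := h2.1
            _ ≤ lam * (2:ℝ)^k := h1.2
            _ = (2:ℝ)^k * lam := by ring
        have h5 : (2:ℝ)^(k-1) < (2:ℝ)^k' := by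
          have := (mul_lt_mul_iff_left₀ hlam).mp h3
          exact this
        have h6 : (2:ℝ)^(k'-1) < (2:ℝ)^k := by
          have := (mul_lt_mul_iff_left₀ hlam).mp h4
          exact this
        have h7 : k - 1 < k' := (zpow_lt_zpow_iff_right₀ one_lt_two).mp h5
        have h8 : k' - 1 < k := (zpow_lt_zpow_iff_right₀ one_lt_two).mp h6
        omega
      have hbiu : ∑ k ∈ KK, ∑ y ∈ (hFfin k).toFinset, |f y| ^ τ ≤ W := by
        rw [← Finset.sum_biUnion hdisj]
        rw [hWdef]
        exact Summable.sum_le_tsum _ (fun y _ => Real.rpow_nonneg (abs_nonneg _) τ) hsum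
      calc ∑ k ∈ KK, (((hFfin k).toFinset).card : ℝ) * (2:ℝ)^((k:ℝ)*τ)
          = ∑ k ∈ KK, (2:ℝ)^τ * lam⁻¹ ^ τ *
              ((((hFfin k).toFinset).card : ℝ) * (lam * (2:ℝ)^(k-1))^τ) := by
            apply Finset.sum_congr rfl
            intro k _
            rw [hone k]
            ring
        _ ≤ ∑ k ∈ KK, (2:ℝ)^τ * lam⁻¹ ^ τ * (∑ y ∈ (hFfin k).toFinset, |f y| ^ τ) := by
            apply Finset.sum_le_sum
            intro k _
            apply mul_le_mul_of_nonneg_left (hcardb k)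
            positivity
        _ = (2:ℝ)^τ * lam⁻¹ ^ τ * ∑ k ∈ KK, (∑ y ∈ (hFfin k).toFinset, |f y| ^ τ) := by
            rw [Finset.mul_sum]
        _ ≤ (2:ℝ)^τ * lam⁻¹ ^ τ * W := by
            apply mul_le_mul_of_nonneg_left hbiu
            positivity
    calc (T.ncard : ℝ)
        ≤ ∑ p ∈ R, (((hFfin p.2).toFinset).card : ℝ) * min (C * b^p.1)
            ((C/c)^2 * ((2:ℝ)^p.2 / (c₀ * σ ^ (p.2 - ⌈α*((p.1:ℕ):ℝ)⌉).natAbs))^2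
              * (b^p.1/(a^p.1)^2)) := hsum1
      _ ≤ Λ * ∑ k ∈ KK, (((hFfin k).toFinset).card : ℝ) * (2:ℝ)^((k:ℝ)*τ) := hregroup
      _ ≤ Λ * ((2:ℝ)^τ * lam⁻¹ ^ τ * W) := mul_le_mul_of_nonneg_left hfinal hΛ.le
      _ = (Λ * (2:ℝ)^τ) * lam⁻¹ ^ τ * W := by ring
  -- endgame
  haveI : MeasurableSingletonClass V := ⟨fun x => hms {x}⟩
  set S := {x : V | lam < globalMax d f x} with hSdef
  by_cases hSfin : S.Finite
  · rw [Measure.count_apply_finite S hSfin]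
    have hkey := key S (le_refl _) hSfin
    rw [Set.ncard_eq_toFinset_card S hSfin] at hkey
    calc (hSfin.toFinset.card : ENNReal)
        = ENNReal.ofReal ((hSfin.toFinset.card : ℝ)) := by
          rw [ENNReal.ofReal_natCast]
      _ ≤ ENNReal.ofReal (Λ * (2:ℝ)^τ * lam⁻¹ ^ τ * W) := ENNReal.ofReal_le_ofReal hkey
  · exfalso
    have hSinf : S.Infinite := hSfin
    obtain ⟨T, hTsub, hTfin, hTcard⟩ :=
      hSinf.exists_subset_ncard_eq (⌈Λ * (2:ℝ)^τ * lam⁻¹ ^ τ * W⌉₊ + 1)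
    have h1 := key T hTsub hTfin
    rw [hTcard] at h1
    have h2 : (Λ * (2:ℝ)^τ * lam⁻¹ ^ τ * W) ≤ (⌈Λ * (2:ℝ)^τ * lam⁻¹ ^ τ * W⌉₊ : ℝ) :=
      Nat.le_ceil _
    push_cast at h1
    linarith
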